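/- Let ξ be a probability measure supported in [1,∞) satisfying the stationarity relation ∫ f dξ = ∫∫ f(1+tz) μ(dz) ξ(dt) for all integrable f, where μ is a probability measure with E[Z^u] > 1 for u > α. If X(u) := ∫ t^u ξ(dt) were finite for some real u > α, then X(u) ≥ M(u) X(u) with M(u) = ∫ z^u μ(dz) > 1, a contradiction; hence ∫ t^u ξ(dt) = ∞ for all real u > α. -/

import Mathlib

open MeasureTheory
open scoped ENNReal

theorem stmt17 (cm cp α : ℝ) (hcm : 0 < cm) (hcmcp : cm ≤ cp)
    (hα : α ∈ Set.Ioo (0:ℝ) 1)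
    (μ : Measure ℝ) [IsProbabilityMeasure μ] (hμ : μ (Set.Icc cm cp)ᶜ = 0)
    (hMα : ∫ z, z ^ α ∂μ = 1) (hM : ∀ u : ℝ, α < u → 1 < ∫ z, z ^ u ∂μ)
    (ξ : Measure ℝ) [IsProbabilityMeasure ξ] (hξ : ξ (Set.Iio 1) = 0)
    (hstat : ∀ f : ℝ → ℝ, Measurable f → (∃ C, ∀ x, |f x| ≤ C) →
      ∫ t, f t ∂ξ = ∫ t, ∫ z, f (1 + t * z) ∂μ ∂ξ) :
    ∀ u : ℝ, α < u → ∫⁻ t, ENNReal.ofReal (t ^ u) ∂ξ = ⊤ := by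
  intro u hu
  by_contra hfin
  set M : ℝ := ∫ z, z ^ u ∂μ with hMdef
  have hM1 : 1 < M := hM u hu
  have hM0 : 0 < M := lt_trans one_pos hM1
  have hu0 : 0 < u := lt_trans hα.1 hu
  set K : ℝ := max (cp ^ u) 1 with hKdef
  have hK1 : (1:ℝ) ≤ K := le_max_right _ _
  have hK0 : (0:ℝ) < K := lt_of_lt_of_le one_pos hK1
  set L : ℝ≥0∞ := ∫⁻ t, ENNReal.ofReal (t ^ u) ∂ξ with hLdef
  set X : ℝ := L.toReal with hXdef
  -- a.e. facts
  have hξae : ∀ᵐ t ∂ξ, 1 ≤ t := by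
    rw [ae_iff]
    convert hξ using 2
    ext t; simp [not_le]
  have hμae : ∀ᵐ z ∂μ, z ∈ Set.Icc cm cp := by
    rw [ae_iff]
    convert hμ using 2
    ext z; simp
  -- z ^ u is integrable w.r.t. μ
  have hzmeas : Measurable fun z : ℝ => z ^ u := measurable_id.pow measurable_const
  have hzint : Integrable (fun z : ℝ => z ^ u) μ := by
    refine Integrable.mono' (integrable_const (cp ^ u)) hzmeas.aestronglyMeasurable ?_
    filter_upwards [hμae] with z hz
    have hz0 : 0 < z := lt_of_lt_of_le hcm hz.1
    rw [Real.norm_eq_abs, abs_of_nonneg (Real.rpow_nonneg hz0.le u)]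
    exact Real.rpow_le_rpow hz0.le hz.2 hu0.le
  -- L ≥ 1, hence X ≥ 1
  have hL1 : (1:ℝ≥0∞) ≤ L := by
    have : ∫⁻ _, (1:ℝ≥0∞) ∂ξ ≤ L := by
      refine lintegral_mono_ae ?_
      filter_upwards [hξae] with t ht
      rw [← ENNReal.ofReal_one]
      exact ENNReal.ofReal_le_ofReal (Real.one_le_rpow ht hu0.le)
    simpa using this
  have hX1 : (1:ℝ) ≤ X := by
    have := ENNReal.toReal_mono hfin hL1
    simpa using this
  have hX0 : (0:ℝ) < X := lt_of_lt_of_le one_pos hX1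
  -- the key estimate for each n : ℕ
  have key : ∀ n : ℕ, ∫ t, min (t ^ u) (n:ℝ) ∂ξ ≤ X / M := by
    intro n
    set b : ℝ := (n : ℝ) * K with hbdef
    have hb0 : 0 ≤ b := mul_nonneg (Nat.cast_nonneg n) hK0.le
    set f : ℝ → ℝ := fun t => min ((max t 1) ^ u) b with hfdef
    have hfmeas : Measurable f :=
      ((measurable_id.max measurable_const).pow measurable_const).min measurable_const
    have hfnn : ∀ x, 0 ≤ f x := fun x =>
      le_min (Real.rpow_nonneg (le_trans zero_le_one (le_max_right x 1)) u) hb0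
    have hfbd : ∀ x, |f x| ≤ b := fun x => by
      rw [abs_of_nonneg (hfnn x)]; exact min_le_right _ _
    have E1 := hstat f hfmeas ⟨b, hfbd⟩
    -- inner integrand integrable & pointwise bound
    have hginn : ∀ t : ℝ, Integrable (fun z => f (1 + t * z)) μ := by
      intro t
      refine Integrable.mono' (integrable_const b)
        (hfmeas.comp (measurable_const.add (measurable_const.mul measurable_id))).aestronglyMeasurable ?_
      exact Filter.Eventually.of_forall fun z => by
        rw [Real.norm_eq_abs]; exact hfbd _
    have hinner : ∀ᵐ t ∂ξ, min (t ^ u) (n:ℝ) * M ≤ ∫ z, f (1 + t * z) ∂μ := by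
      filter_upwards [hξae] with t ht
      have ht0 : (0:ℝ) ≤ t := le_trans zero_le_one ht
      have : ∫ z, min (t ^ u) (n:ℝ) * z ^ u ∂μ ≤ ∫ z, f (1 + t * z) ∂μ := by
        refine integral_mono_ae (hzint.const_mul _) (hginn t) ?_
        filter_upwards [hμae] with z hz
        have hz0 : 0 < z := lt_of_lt_of_le hcm hz.1
        have htz0 : 0 ≤ t * z := mul_nonneg ht0 hz0.le
        have hmax : max (1 + t * z) 1 = 1 + t * z := max_eq_left (by linarith)
        have hzK : z ^ u ≤ K :=
          le_trans (Real.rpow_le_rpow hz0.le hz.2 hu0.le) (le_max_left _ _)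
        have hzu0 : 0 ≤ z ^ u := Real.rpow_nonneg hz0.le u
        have h1 : min (t ^ u) (n:ℝ) * z ^ u ≤ min ((t * z) ^ u) b := by
          rw [Real.mul_rpow ht0 hz0.le]
          refine le_min ?_ ?_
          · exact mul_le_mul_of_nonneg_right (min_le_left _ _) hzu0
          · calc min (t ^ u) (n:ℝ) * z ^ u ≤ (n : ℝ) * K :=
                  mul_le_mul (min_le_right _ _) hzK hzu0 (Nat.cast_nonneg n)
              _ = b := rfl
        refine le_trans h1 ?_
        simp only [hfdef, hmax]
        exact min_le_min (Real.rpow_le_rpow htz0 (by linarith) hu0.le) le_rfl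
      calc min (t ^ u) (n:ℝ) * M = ∫ z, min (t ^ u) (n:ℝ) * z ^ u ∂μ :=
            (integral_const_mul _ _).symm
        _ ≤ _ := this
    -- outer integrand integrable
    have houtmeas : StronglyMeasurable fun t : ℝ => ∫ z, f (1 + t * z) ∂μ := by
      apply MeasureTheory.StronglyMeasurable.integral_prod_right
      exact ((hfmeas.comp (measurable_const.add
        (measurable_fst.mul measurable_snd)))).stronglyMeasurable
    have houtint : Integrable (fun t : ℝ => ∫ z, f (1 + t * z) ∂μ) ξ := by
      refine Integrable.mono' (integrable_const b) houtmeas.aestronglyMeasurable ?_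
      refine Filter.Eventually.of_forall fun t => ?_
      calc ‖∫ z, f (1 + t * z) ∂μ‖ ≤ ∫ z, ‖f (1 + t * z)‖ ∂μ :=
            norm_integral_le_integral_norm _
        _ ≤ ∫ _, b ∂μ := by
            refine integral_mono ((hginn t).norm) (integrable_const b) fun z => ?_
            rw [Real.norm_eq_abs]; exact hfbd _
        _ = b := by simp
    -- m_n integrable
    have hmmeas : Measurable fun t : ℝ => min (t ^ u) (n:ℝ) :=
      (measurable_id.pow measurable_const).min measurable_const
    have hmint : Integrable (fun t : ℝ => min (t ^ u) (n:ℝ)) ξ := by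
      refine Integrable.mono' (integrable_const (n : ℝ)) hmmeas.aestronglyMeasurable ?_
      filter_upwards [hξae] with t ht
      rw [Real.norm_eq_abs, abs_of_nonneg (le_min (Real.rpow_nonneg (by linarith) u)
        (Nat.cast_nonneg n))]
      exact min_le_right _ _
    -- chain
    have h2 : M * ∫ t, min (t ^ u) (n:ℝ) ∂ξ ≤ ∫ t, f t ∂ξ := by
      rw [E1]
      calc M * ∫ t, min (t ^ u) (n:ℝ) ∂ξ = ∫ t, min (t ^ u) (n:ℝ) * M ∂ξ := by
            rw [integral_mul_const]; ring
        _ ≤ _ := integral_mono_ae (hmint.mul_const M) houtint hinner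
    have h3 : ∫ t, f t ∂ξ ≤ X := by
      have hfint : Integrable f ξ := by
        refine Integrable.mono' (integrable_const b) hfmeas.aestronglyMeasurable ?_
        exact Filter.Eventually.of_forall fun t => by
          rw [Real.norm_eq_abs]; exact hfbd t
      have hoe : ENNReal.ofReal (∫ t, f t ∂ξ) = ∫⁻ t, ENNReal.ofReal (f t) ∂ξ :=
        ofReal_integral_eq_lintegral_ofReal hfint
          (Filter.Eventually.of_forall hfnn)
      have hle : (∫⁻ t, ENNReal.ofReal (f t) ∂ξ) ≤ L := by
        refine lintegral_mono_ae ?_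
        filter_upwards [hξae] with t ht
        refine ENNReal.ofReal_le_ofReal ?_
        calc f t ≤ (max t 1) ^ u := min_le_left _ _
          _ = t ^ u := by rw [max_eq_left ht]
      have := le_trans (le_of_eq hoe) hle
      rw [hXdef]
      exact (ENNReal.ofReal_le_iff_le_toReal hfin).1 this
    have := le_trans h2 h3
    rw [le_div_iff₀ hM0]
    linarith [this]
  -- pass to the sup over n
  have hofReal : ∀ n : ℕ,
      (∫⁻ t, min (ENNReal.ofReal (t ^ u)) (n:ℝ≥0∞) ∂ξ) ≤ ENNReal.ofReal (X / M) := by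
    intro n
    have hmmeas : Measurable fun t : ℝ => min (t ^ u) (n:ℝ) :=
      (measurable_id.pow measurable_const).min measurable_const
    have hmint : Integrable (fun t : ℝ => min (t ^ u) (n:ℝ)) ξ := by
      refine Integrable.mono' (integrable_const (n : ℝ)) hmmeas.aestronglyMeasurable ?_
      filter_upwards [hξae] with t ht
      rw [Real.norm_eq_abs, abs_of_nonneg (le_min (Real.rpow_nonneg (by linarith) u)
        (Nat.cast_nonneg n))]
      exact min_le_right _ _
    have hmnn : ∀ᵐ t ∂ξ, 0 ≤ min (t ^ u) (n:ℝ) := by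
      filter_upwards [hξae] with t ht
      exact le_min (Real.rpow_nonneg (by linarith) u) (Nat.cast_nonneg n)
    have hoe : ENNReal.ofReal (∫ t, min (t ^ u) (n:ℝ) ∂ξ)
        = ∫⁻ t, ENNReal.ofReal (min (t ^ u) (n:ℝ)) ∂ξ :=
      ofReal_integral_eq_lintegral_ofReal hmint hmnn
    have heq : ∀ t : ℝ, ENNReal.ofReal (min (t ^ u) (n:ℝ))
        = min (ENNReal.ofReal (t ^ u)) (n:ℝ≥0∞) := by
      intro t
      have hmono : Monotone ENNReal.ofReal := fun a b h => ENNReal.ofReal_le_ofReal h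
      rw [hmono.map_min, ENNReal.ofReal_natCast]
    calc (∫⁻ t, min (ENNReal.ofReal (t ^ u)) (n:ℝ≥0∞) ∂ξ)
        = ∫⁻ t, ENNReal.ofReal (min (t ^ u) (n:ℝ)) ∂ξ := by
          refine lintegral_congr fun t => (heq t).symm
      _ = ENNReal.ofReal (∫ t, min (t ^ u) (n:ℝ) ∂ξ) := hoe.symm
      _ ≤ ENNReal.ofReal (X / M) := ENNReal.ofReal_le_ofReal (key n)
  have hsup : (⨆ n : ℕ, ∫⁻ t, min (ENNReal.ofReal (t ^ u)) (n:ℝ≥0∞) ∂ξ) = L := by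
    rw [hLdef]
    rw [← lintegral_iSup]
    · refine lintegral_congr fun t => ?_
      refine le_antisymm (iSup_le fun n => min_le_left _ _) ?_
      rcases eq_or_ne (ENNReal.ofReal (t ^ u)) ⊤ with h | h
      · exact absurd h ENNReal.ofReal_ne_top
      · obtain ⟨n, hn⟩ := ENNReal.exists_nat_gt h
        calc ENNReal.ofReal (t ^ u) = min (ENNReal.ofReal (t ^ u)) (n:ℝ≥0∞) :=
              (min_eq_left hn.le).symm
          _ ≤ ⨆ m : ℕ, min (ENNReal.ofReal (t ^ u)) (m:ℝ≥0∞) := le_iSup (fun m : ℕ => min (ENNReal.ofReal (t ^ u)) (m:ℝ≥0∞)) n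
    · exact fun n => (ENNReal.measurable_ofReal.comp
        (measurable_id.pow measurable_const)).min measurable_const
    · intro i j hij t
      exact min_le_min le_rfl (by exact_mod_cast Nat.cast_le.2 hij)
  have hLle : L ≤ ENNReal.ofReal (X / M) := by
    rw [← hsup]; exact iSup_le hofReal
  have hlt : ENNReal.ofReal (X / M) < L := by
    have : ENNReal.ofReal (X / M) < ENNReal.ofReal X := by
      rw [ENNReal.ofReal_lt_ofReal_iff hX0]
      exact div_lt_self hX0 hM1
    rwa [hXdef, ENNReal.ofReal_toReal hfin] at this
  exact absurd hLle (not_le.2 hlt)
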